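/- Let (Δ_k)_{k=0}^{K} be a positive sequence with initial value Δ₀ and updating rule: on successful iterations Δ_{k+1} = min(γ_inc·Δ_k, Δ_max) and on unsuccessful iterations Δ_{k+1} = γ_dec·Δ_k, where 0 < γ_dec < 1 < γ_inc and Δ_max ≥ Δ₀. Fix Δ ≤ min(Δ₀, γ_inc⁻¹Δ_max). Then #{k ≤ K successful with Δ_k < γ_inc⁻¹Δ} ≤ (log γ_dec⁻¹ / log γ_inc)·#{k ≤ K unsuccessful with Δ_k < γ_dec⁻¹Δ}. -/
import Mathlib


open Finset

/-- Inequality (41) of Lemma 3.10: with trust-region updating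
`Δ_{k+1} = min(γ_inc Δ_k, Δ_max)` on successful and `Δ_{k+1} = γ_dec Δ_k` on unsuccessful
iterations, for any `Δ ≤ min(Δ₀, γ_inc⁻¹ Δ_max)`,
`#{successful k ≤ K with Δ_k < γ_inc⁻¹ Δ} ≤
  (log γ_dec⁻¹ / log γ_inc) ⬝ #{unsuccessful k ≤ K with Δ_k < γ_dec⁻¹ Δ}`. -/
theorem stmt_11 (K : ℕ) (Δ : ℕ → ℝ) (Δ0 Δmax : ℝ) (hΔ0 : Δ 0 = Δ0) (hΔmax : Δ0 ≤ Δmax)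
    (hpos : ∀ k, 0 < Δ k)
    (γdec γinc : ℝ) (hγdec0 : 0 < γdec) (hγdec1 : γdec < 1) (hγinc : 1 < γinc)
    (S U : Finset ℕ) (hcover : Finset.range (K + 1) = S ∪ U) (hdisj : Disjoint S U)
    (hsucc : ∀ k ∈ S, Δ (k + 1) = min (γinc * Δ k) Δmax)
    (hunsucc : ∀ k ∈ U, Δ (k + 1) = γdec * Δ k)
    (D : ℝ) (hD : 0 < D) (hDle : D ≤ min Δ0 (γinc⁻¹ * Δmax)) :
    ((S.filter (fun k => Δ k < γinc⁻¹ * D)).card : ℝ) ≤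
      (Real.log γdec⁻¹ / Real.log γinc) * ((U.filter (fun k => Δ k < γdec⁻¹ * D)).card : ℝ) := by
  have hΔ0pos : 0 < Δ0 := hΔ0 ▸ hpos 0
  have hγincpos : 0 < γinc := lt_trans one_pos hγinc
  have hlogI : 0 < Real.log γinc := Real.log_pos hγinc
  have hlogL : 0 < Real.log γdec⁻¹ := by
    rw [Real.log_inv]
    have := Real.log_neg hγdec0 hγdec1
    linarith
  have hDΔ0 : D ≤ Δ0 := le_trans hDle (min_le_left _ _)
  have hDmax' : D ≤ γinc⁻¹ * Δmax := le_trans hDle (min_le_right _ _)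
  have hDmax : γinc * D ≤ Δmax := by
    have h := mul_le_mul_of_nonneg_left hDmax' (le_of_lt hγincpos)
    rwa [← mul_assoc, mul_inv_cancel₀ (ne_of_gt hγincpos), one_mul] at h
  have hDleΔmax : D ≤ Δmax := le_trans (le_mul_of_one_le_left hD.le hγinc.le) hDmax
  set f : ℕ → ℝ := fun k => max 0 (Real.log D - Real.log (Δ k)) with hf
  -- terms on filtered successful iterations
  have hS1 : ∀ k ∈ S.filter (fun k => Δ k < γinc⁻¹ * D),
      f (k + 1) - f k = -Real.log γinc := by
    intro k hk
    rw [Finset.mem_filter] at hk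
    obtain ⟨hkS, hklt⟩ := hk
    have hmul : γinc * Δ k < D := by
      have h := mul_lt_mul_of_pos_left hklt hγincpos
      rwa [← mul_assoc, mul_inv_cancel₀ (ne_of_gt hγincpos), one_mul] at h
    have hΔk1 : Δ (k + 1) = γinc * Δ k := by
      rw [hsucc k hkS, min_eq_left]
      linarith
    have hlog1 : Real.log (γinc * Δ k) < Real.log D :=
      Real.log_lt_log (mul_pos hγincpos (hpos k)) hmul
    rw [Real.log_mul (ne_of_gt hγincpos) (ne_of_gt (hpos k))] at hlog1
    have hlt : Δ k < D := lt_of_lt_of_le hklt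
      (by nlinarith [inv_lt_one_of_one_lt₀ hγinc])
    have hlog2 : Real.log (Δ k) < Real.log D := Real.log_lt_log (hpos k) hlt
    simp only [hf, hΔk1, Real.log_mul (ne_of_gt hγincpos) (ne_of_gt (hpos k))]
    rw [max_eq_right (by linarith), max_eq_right (by linarith)]
    ring
  -- terms on unfiltered successful iterations
  have hS2 : ∀ k ∈ S.filter (fun k => ¬ Δ k < γinc⁻¹ * D),
      f (k + 1) - f k ≤ 0 := by
    intro k hk
    rw [Finset.mem_filter] at hk
    obtain ⟨hkS, hkge⟩ := hk
    push_neg at hkge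
    have hmul : D ≤ γinc * Δ k := by
      have h := mul_le_mul_of_nonneg_left hkge (le_of_lt hγincpos)
      rwa [← mul_assoc, mul_inv_cancel₀ (ne_of_gt hγincpos), one_mul] at h
    have hΔk1 : D ≤ Δ (k + 1) := by
      rw [hsucc k hkS]; exact le_min hmul hDleΔmax
    have : Real.log D ≤ Real.log (Δ (k + 1)) := Real.log_le_log hD hΔk1
    have hf1 : f (k + 1) = 0 := by simp only [hf]; rw [max_eq_left (by linarith)]
    have hf2 : 0 ≤ f k := le_max_left _ _
    simp only [hf] at hf1 hf2 ⊢
    linarith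
  -- terms on unsuccessful iterations
  have hU1 : ∀ k ∈ U, f (k + 1) - f k ≤ Real.log γdec⁻¹ := by
    intro k hkU
    have hΔk1 : Δ (k + 1) = γdec * Δ k := hunsucc k hkU
    have hlog : Real.log (Δ (k + 1)) = Real.log γdec + Real.log (Δ k) := by
      rw [hΔk1, Real.log_mul (ne_of_gt hγdec0) (ne_of_gt (hpos k))]
    have hc : 0 ≤ Real.log γdec⁻¹ := hlogL.le
    have key : f (k + 1) ≤ f k + Real.log γdec⁻¹ := by
      simp only [hf, hlog, Real.log_inv] at *
      have h1 : Real.log D - (Real.log γdec + Real.log (Δ k))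
          = (Real.log D - Real.log (Δ k)) + (-Real.log γdec) := by ring
      rw [h1]
      calc max 0 ((Real.log D - Real.log (Δ k)) + (-Real.log γdec))
          ≤ max (0 + (-Real.log γdec)) ((Real.log D - Real.log (Δ k)) + (-Real.log γdec)) := by
            apply max_le_max_right
            linarith
        _ = max 0 (Real.log D - Real.log (Δ k)) + (-Real.log γdec) := by
            rw [max_add_add_right]
        _ = max 0 (Real.log D - Real.log (Δ k)) + -Real.log γdec := rfl
    linarith
  have hU2 : ∀ k ∈ U.filter (fun k => ¬ Δ k < γdec⁻¹ * D),
      f (k + 1) - f k ≤ 0 := by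
    intro k hk
    rw [Finset.mem_filter] at hk
    obtain ⟨hkU, hkge⟩ := hk
    push_neg at hkge
    have hmul : D ≤ γdec * Δ k := by
      have h := mul_le_mul_of_nonneg_left hkge (le_of_lt hγdec0)
      rwa [← mul_assoc, mul_inv_cancel₀ (ne_of_gt hγdec0), one_mul] at h
    have hΔk1 : D ≤ Δ (k + 1) := by rw [hunsucc k hkU]; exact hmul
    have : Real.log D ≤ Real.log (Δ (k + 1)) := Real.log_le_log hD hΔk1
    have hf1 : f (k + 1) = 0 := by simp only [hf]; rw [max_eq_left (by linarith)]
    have hf2 : 0 ≤ f k := le_max_left _ _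
    simp only [hf] at hf1 hf2 ⊢
    linarith
  -- sum over S
  set a : ℕ := (S.filter (fun k => Δ k < γinc⁻¹ * D)).card
  set b : ℕ := (U.filter (fun k => Δ k < γdec⁻¹ * D)).card
  have hsumS : ∑ k ∈ S, (f (k + 1) - f k) ≤ -(a : ℝ) * Real.log γinc := by
    rw [← Finset.sum_filter_add_sum_filter_not S (fun k => Δ k < γinc⁻¹ * D)]
    have h1 : ∑ k ∈ S.filter (fun k => Δ k < γinc⁻¹ * D), (f (k + 1) - f k)
        = -(a : ℝ) * Real.log γinc := by
      rw [Finset.sum_congr rfl hS1, Finset.sum_const, nsmul_eq_mul]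
      ring
    have h2 : ∑ k ∈ S.filter (fun k => ¬ Δ k < γinc⁻¹ * D), (f (k + 1) - f k) ≤ 0 :=
      Finset.sum_nonpos hS2
    linarith
  have hsumU : ∑ k ∈ U, (f (k + 1) - f k) ≤ (b : ℝ) * Real.log γdec⁻¹ := by
    rw [← Finset.sum_filter_add_sum_filter_not U (fun k => Δ k < γdec⁻¹ * D)]
    have h1 : ∑ k ∈ U.filter (fun k => Δ k < γdec⁻¹ * D), (f (k + 1) - f k)
        ≤ (b : ℝ) * Real.log γdec⁻¹ := by
      have := Finset.sum_le_card_nsmul (U.filter (fun k => Δ k < γdec⁻¹ * D))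
        (fun k => f (k + 1) - f k) (Real.log γdec⁻¹)
        (fun k hk => hU1 k (Finset.mem_of_mem_filter k hk))
      rwa [nsmul_eq_mul] at this
    have h2 : ∑ k ∈ U.filter (fun k => ¬ Δ k < γdec⁻¹ * D), (f (k + 1) - f k) ≤ 0 :=
      Finset.sum_nonpos hU2
    linarith
  -- telescoping
  have htel : f (K + 1) - f 0 = ∑ k ∈ Finset.range (K + 1), (f (k + 1) - f k) := by
    rw [Finset.sum_range_sub]
  have hsplit : ∑ k ∈ Finset.range (K + 1), (f (k + 1) - f k)
      = ∑ k ∈ S, (f (k + 1) - f k) + ∑ k ∈ U, (f (k + 1) - f k) := by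
    rw [hcover, Finset.sum_union hdisj]
  have hf0 : f 0 = 0 := by
    have : Real.log (Δ 0) ≥ Real.log D := Real.log_le_log hD (hΔ0 ▸ hDΔ0)
    simp only [hf]; rw [max_eq_left (by linarith)]
  have hfK : 0 ≤ f (K + 1) := le_max_left _ _
  have hmain : (a : ℝ) * Real.log γinc ≤ (b : ℝ) * Real.log γdec⁻¹ := by
    have := htel
    rw [hsplit] at this
    nlinarith
  rw [div_mul_eq_mul_div, le_div_iff₀ hlogI]
  linarith
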